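/- (Descent property of the singular-value penalized iteration, logistic case) Let Θ be a threshold function, λ ≥ 0, and suppose there is L_Θ ∈ [0,1] such that u ↦ sup{t : Θ(t;λ) ≤ u} − (1−L_Θ)u is nondecreasing on (0,∞); let P satisfy condition (constrP) for Θ. Let Y = [y_{ik}] ∈ ℝ^{n×m} with all y_{ik} ∈ {0,1} and X = [x₁,…,x_n]ᵀ ∈ ℝ^{n×p}, and assume ‖X‖₂² < 4(2 − L_Θ). Starting from any B⁽⁰⁾ ∈ ℝ^{p×m}, define iteratively B⁽ʲ⁺¹⁾ = Θ^σ( B⁽ʲ⁾ + XᵀY − Xᵀμ(B⁽ʲ⁾); λ ), where μ(B) = [1/(1+exp(−x_iᵀ b_k))]_{n×m} for B = [b₁,…,b_m]. Then the objective F(B) = −Σ_{k=1}^m Σ_{i=1}^n ( y_{ik} x_iᵀ b_k − log(1 + exp(x_iᵀ b_k)) ) + Σ_s P(σ_s(B);λ) satisfies, for all j ≥ 1, F(B⁽ʲ⁾) − F(B⁽ʲ⁺¹⁾) ≥ (C/2)‖B⁽ʲ⁾ − B⁽ʲ⁺¹⁾‖_F² with C = 2 − L_Θ − ‖X‖₂²/4;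 in particular F(B⁽ʲ⁾) is nonincreasing. -/

import Mathlib

open Matrix

/-- Squared Frobenius norm of a real matrix. -/
def frobSq {n m : ℕ} (A : Matrix (Fin n) (Fin m) ℝ) : ℝ := ∑ i, ∑ j, A i j ^ 2

/-- `(U, σ, V)` is a (reduced) singular value decomposition of the real `n × m` matrix `B`. -/
def IsSVD {n m k : ℕ} (B : Matrix (Fin n) (Fin m) ℝ) (U : Matrix (Fin n) (Fin k) ℝ)
    (σ : Fin k → ℝ) (V : Matrix (Fin m) (Fin k) ℝ) : Prop :=
  Uᵀ * U = 1 ∧ Vᵀ * V = 1 ∧ Antitone σ ∧ (∀ i, 0 ≤ σ i) ∧ B = U * diagonal σ * Vᵀ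

/-- A threshold function `Θ(t; λ)`. -/
def IsThresholdFunction (Θ : ℝ → ℝ → ℝ) : Prop :=
  ∀ lam : ℝ, 0 ≤ lam →
    (∀ t : ℝ, Θ (-t) lam = -Θ t lam) ∧
    (Monotone fun t => Θ t lam) ∧
    Filter.Tendsto (fun t => Θ t lam) Filter.atTop Filter.atTop ∧
    (∀ t : ℝ, 0 ≤ t → 0 ≤ Θ t lam ∧ Θ t lam ≤ t)

/-- The squared spectral norm `‖X‖₂²` of a real matrix. -/
noncomputable def spectralNormSq {n p : ℕ} (X : Matrix (Fin n) (Fin p) ℝ) : ℝ :=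
  ‖LinearMap.toContinuousLinearMap (Matrix.toEuclideanLin X)‖ ^ 2

/-- The logistic mean matrix `μ(B) = [1/(1+exp(−x_iᵀ b_k))]_{n×m}`. -/
noncomputable def logisticMu {n p m : ℕ} (X : Matrix (Fin n) (Fin p) ℝ)
    (B : Matrix (Fin p) (Fin m) ℝ) : Matrix (Fin n) (Fin m) ℝ :=
  Matrix.of fun i k => 1 / (1 + Real.exp (-(X * B) i k))

/-- The negative log-likelihood of the vector logistic model:
`−∑_k ∑_i ( y_{ik} x_iᵀ b_k − log(1 + exp(x_iᵀ b_k)) )`. -/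
noncomputable def logisticNegLogLik {n p m : ℕ} (X : Matrix (Fin n) (Fin p) ℝ)
    (Y : Matrix (Fin n) (Fin m) ℝ) (B : Matrix (Fin p) (Fin m) ℝ) : ℝ :=
  -∑ k, ∑ i, (Y i k * (X * B) i k - Real.log (1 + Real.exp ((X * B) i k)))

open intervalIntegral


noncomputable def sigf (t : ℝ) : ℝ := Real.exp t / (1 + Real.exp t)

lemma one_add_exp_pos (t : ℝ) : (0:ℝ) < 1 + Real.exp t := by positivity

lemma hasDerivAt_sigf (t : ℝ) :
    HasDerivAt sigf (Real.exp t / (1 + Real.exp t)^2) t := by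
  have h := (Real.hasDerivAt_exp t).div ((Real.hasDerivAt_exp t).const_add 1)
    (ne_of_gt (one_add_exp_pos t))
  exact h.congr_deriv (by ring)

lemma sigf_slope {u v : ℝ} (huv : u ≤ v) : sigf v - sigf u ≤ (v - u) / 4 := by
  have hmono : Monotone (fun x => x / 4 - sigf x) := by
    apply monotone_of_deriv_nonneg
    · intro x
      exact ((hasDerivAt_id x).div_const 4 |>.sub (hasDerivAt_sigf x)).differentiableAt
    · intro x
      have hd : deriv (fun x => x / 4 - sigf x) x
          = 1/4 - Real.exp x / (1 + Real.exp x)^2 := by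
        have := ((hasDerivAt_id x).div_const 4 |>.sub (hasDerivAt_sigf x))
        exact this.deriv
      rw [hd]
      have he := Real.exp_pos x
      have h2 : (0:ℝ) < (1 + Real.exp x)^2 := by positivity
      rw [sub_nonneg, div_le_iff₀ h2]
      nlinarith [sq_nonneg (1 - Real.exp x)]
  have := hmono huv
  simp only at this
  linarith

lemma hasDerivAt_log1e (t : ℝ) :
    HasDerivAt (fun x => Real.log (1 + Real.exp x)) (sigf t) t := by
  have h := ((Real.hasDerivAt_exp t).const_add 1).log (ne_of_gt (one_add_exp_pos t))
  simpa [sigf] using h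

lemma logistic_quad (t t' : ℝ) :
    Real.log (1 + Real.exp t') - Real.log (1 + Real.exp t) - sigf t * (t' - t)
      ≤ (t' - t)^2 / 8 := by
  have hcont : Continuous sigf :=
    Real.continuous_exp.div (continuous_const.add Real.continuous_exp)
      (fun x => ne_of_gt (one_add_exp_pos x))
  have hftc : ∀ x y : ℝ, Real.log (1 + Real.exp y) - Real.log (1 + Real.exp x)
      = ∫ u in x..y, sigf u := by
    intro x y
    rw [integral_eq_sub_of_hasDerivAt (fun u _ => hasDerivAt_log1e u)
      (hcont.intervalIntegrable x y)]
  rcases le_total t t' with h | h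
  · have hmono : (∫ u in t..t', (sigf u - sigf t)) ≤ ∫ u in t..t', ((u - t)/4) :=
      integral_mono_on h
      (by exact (hcont.sub continuous_const).intervalIntegrable t t')
      (by exact ((continuous_id.sub continuous_const).div_const 4).intervalIntegrable t t')
      (fun u hu => by
        have := sigf_slope hu.1
        linarith)
    have hsub : (∫ u in t..t', (sigf u - sigf t)) = (∫ u in t..t', sigf u) - sigf t * (t' - t) := by
      rw [intervalIntegral.integral_sub (hcont.intervalIntegrable t t')
        (intervalIntegrable_const), integral_const]
      simp only [smul_eq_mul]
      ring
    have hlin : (∫ u in t..t', ((u - t) / 4)) = (t' - t)^2 / 8 := by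
      have : ∀ u : ℝ, HasDerivAt (fun x => (x - t)^2 / 8) ((u - t)/4) u := by
        intro u
        have h1 := ((hasDerivAt_id u).sub_const t).pow 2
        have h2 := h1.div_const 8
        exact h2.congr_deriv (by norm_num; ring)
      rw [integral_eq_sub_of_hasDerivAt (fun u _ => this u)
        (((continuous_id.sub continuous_const).div_const 4).intervalIntegrable t t')]
      simp
    rw [hftc t t']
    linarith [hmono, hsub.symm ▸ hmono, hsub, hlin]
  · -- t' ≤ t
    have hmono : (∫ u in t'..t, (sigf t - sigf u)) ≤ ∫ u in t'..t, ((t - u)/4) :=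
      integral_mono_on h
      (by exact (continuous_const.sub hcont).intervalIntegrable t' t)
      (by exact ((continuous_const.sub continuous_id).div_const 4).intervalIntegrable t' t)
      (fun u hu => by
        have := sigf_slope hu.2
        linarith)
    have hsub : (∫ u in t'..t, (sigf t - sigf u)) = sigf t * (t - t') - (∫ u in t'..t, sigf u) := by
      rw [intervalIntegral.integral_sub (intervalIntegrable_const)
        (hcont.intervalIntegrable t' t), integral_const]
      simp only [smul_eq_mul]
      ring
    have hlin : (∫ u in t'..t, ((t - u) / 4)) = (t - t')^2 / 8 := by
      have : ∀ u : ℝ, HasDerivAt (fun x => -((t - x)^2 / 8)) ((t - u)/4) u := by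
        intro u
        have h1 := ((hasDerivAt_const u t).sub (hasDerivAt_id u)).pow 2
        have h2 := (h1.div_const 8).neg
        exact h2.congr_deriv (by norm_num; ring)
      rw [integral_eq_sub_of_hasDerivAt (fun u _ => this u)
        (((continuous_const.sub continuous_id).div_const 4).intervalIntegrable t' t)]
      ring
    have h1 : Real.log (1 + Real.exp t') - Real.log (1 + Real.exp t)
        = -(∫ u in t'..t, sigf u) := by
      linarith [hftc t' t]
    rw [h1]
    nlinarith [hmono, hsub, hlin]


section ScalarKey
variable {Θ : ℝ → ℝ → ℝ} {lam L : ℝ}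

lemma theta_zero (hodd : ∀ t : ℝ, Θ (-t) lam = -Θ t lam) : Θ 0 lam = 0 := by
  have := hodd 0; simp at this; linarith [this]

lemma sfun_bddAbove (hmono : Monotone fun t => Θ t lam)
    (htop : Filter.Tendsto (fun t => Θ t lam) Filter.atTop Filter.atTop) (u : ℝ) :
    BddAbove {s : ℝ | Θ s lam ≤ u} := by
  obtain ⟨t₀, ht₀⟩ := Filter.eventually_atTop.mp (htop.eventually_ge_atTop (u + 1))
  refine ⟨t₀, fun s hs => ?_⟩
  by_contra hc
  push_neg at hc
  have := ht₀ s (le_of_lt hc)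
  simp only [Set.mem_setOf_eq] at hs
  linarith

lemma sfun_mem_zero (hodd : ∀ t : ℝ, Θ (-t) lam = -Θ t lam) {u : ℝ} (hu : 0 ≤ u) :
    (0:ℝ) ∈ {s : ℝ | Θ s lam ≤ u} := by
  simp only [Set.mem_setOf_eq, theta_zero hodd]; exact hu

lemma le_sfun (hmono : Monotone fun t => Θ t lam)
    (htop : Filter.Tendsto (fun t => Θ t lam) Filter.atTop Filter.atTop)
    {x u : ℝ} (hx : Θ x lam ≤ u) : x ≤ sSup {s : ℝ | Θ s lam ≤ u} :=
  le_csSup (sfun_bddAbove hmono htop u) hx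

lemma sfun_le (hodd : ∀ t : ℝ, Θ (-t) lam = -Θ t lam)
    (hmono : Monotone fun t => Θ t lam)
    {a u : ℝ} (hu : 0 ≤ u) (hua : u < Θ a lam) : sSup {s : ℝ | Θ s lam ≤ u} ≤ a := by
  apply csSup_le ⟨0, sfun_mem_zero hodd hu⟩
  intro s hs
  simp only [Set.mem_setOf_eq] at hs
  by_contra hc
  push_neg at hc
  have := hmono (le_of_lt hc)
  simp only at this
  linarith

lemma sfun_monotoneOn (hodd : ∀ t : ℝ, Θ (-t) lam = -Θ t lam)
    (hmono : Monotone fun t => Θ t lam)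
    (htop : Filter.Tendsto (fun t => Θ t lam) Filter.atTop Filter.atTop) :
    MonotoneOn (fun u => sSup {s : ℝ | Θ s lam ≤ u}) (Set.Ici (0:ℝ)) := by
  intro u hu v hv huv
  exact csSup_le_csSup (sfun_bddAbove hmono htop v) ⟨0, sfun_mem_zero hodd hu⟩
    (fun s hs => le_trans hs huv)

lemma sfun_intervalIntegrable (hodd : ∀ t : ℝ, Θ (-t) lam = -Θ t lam)
    (hmono : Monotone fun t => Θ t lam)
    (htop : Filter.Tendsto (fun t => Θ t lam) Filter.atTop Filter.atTop)
    {x y : ℝ} (hx : 0 ≤ x) (hy : 0 ≤ y) :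
    IntervalIntegrable (fun u => sSup {s : ℝ | Θ s lam ≤ u} - u) MeasureTheory.volume x y := by
  apply IntervalIntegrable.sub
  · exact MonotoneOn.intervalIntegrable
      ((sfun_monotoneOn hodd hmono htop).mono (by
        rcases le_total x y with h | h
        · rw [Set.uIcc_of_le h]; exact fun z hz => le_trans hx hz.1
        · rw [Set.uIcc_of_ge h]; exact fun z hz => le_trans hy hz.1))
  · exact continuous_id.intervalIntegrable x y

lemma pbar_nonneg (hodd : ∀ t : ℝ, Θ (-t) lam = -Θ t lam)
    (hmono : Monotone fun t => Θ t lam)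
    (htop : Filter.Tendsto (fun t => Θ t lam) Filter.atTop Filter.atTop)
    (hbnd : ∀ t : ℝ, 0 ≤ t → 0 ≤ Θ t lam ∧ Θ t lam ≤ t)
    (q : ℝ → ℝ) (hq : ∀ θ, 0 ≤ q θ) {θ : ℝ} (hθ : 0 ≤ θ) :
    0 ≤ (∫ u in (0:ℝ)..θ, (sSup {s : ℝ | Θ s lam ≤ u} - u)) + q θ := by
  have h1 : 0 ≤ ∫ u in (0:ℝ)..θ, (sSup {s : ℝ | Θ s lam ≤ u} - u) := by
    apply intervalIntegral.integral_nonneg hθ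
    intro u hu
    have : u ≤ sSup {s : ℝ | Θ s lam ≤ u} :=
      le_sfun hmono htop (hbnd u hu.1).2
    linarith
  linarith [hq θ]

lemma scalar_key
    (hodd : ∀ t : ℝ, Θ (-t) lam = -Θ t lam)
    (hmono : Monotone fun t => Θ t lam)
    (htop : Filter.Tendsto (fun t => Θ t lam) Filter.atTop Filter.atTop)
    (hbnd : ∀ t : ℝ, 0 ≤ t → 0 ≤ Θ t lam ∧ Θ t lam ≤ t)
    (hL0 : 0 ≤ L) (hL1 : L ≤ 1)
    (hLmono : ∀ u v : ℝ, 0 < u → u ≤ v →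
      sSup {s : ℝ | Θ s lam ≤ u} - (1 - L) * u ≤ sSup {s : ℝ | Θ s lam ≤ v} - (1 - L) * v)
    (q : ℝ → ℝ) (hq : ∀ θ, 0 ≤ q θ) (hqΘ : ∀ t, q (Θ t lam) = 0)
    (a b : ℝ) (ha : 0 ≤ a) (hb : 0 ≤ b) :
    (a - Θ a lam)^2/2 + ((∫ u in (0:ℝ)..(Θ a lam), (sSup {s : ℝ | Θ s lam ≤ u} - u)) + q (Θ a lam))
      + (1-L)/2*(b - Θ a lam)^2
    ≤ (a - b)^2/2 + ((∫ u in (0:ℝ)..b, (sSup {s : ℝ | Θ s lam ≤ u} - u)) + q b) := by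
  set sf : ℝ → ℝ := fun u => sSup {s : ℝ | Θ s lam ≤ u} with hsf
  set bh := Θ a lam with hbh
  obtain ⟨hbh0, hbha⟩ := hbnd a ha
  set c₁ := a - (1-L)*bh with hc₁
  -- pointwise lower bound for u ≥ bh
  have hge_a : ∀ u : ℝ, bh ≤ u → a ≤ sf u := fun u hu => le_sfun hmono htop (hbh ▸ hu)
  have pt_ge : ∀ u : ℝ, bh ≤ u → c₁ + (1-L)*u ≤ sf u := by
    intro u hu
    rcases eq_or_lt_of_le hu with heq | hlt
    · have h := hge_a u hu
      rw [← heq] at h ⊢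
      simp only [hc₁]
      linarith
    · rcases eq_or_lt_of_le hbh0 with hbh0' | hbh0'
      · -- bh = 0
        have hbz : bh = 0 := by rw [hbh, ← hbh0']
        have hu0 : 0 < u := by rw [hbz] at hlt; exact hlt
        have key : ∀ ε : ℝ, 0 < ε → c₁ + (1-L)*u ≤ sf u + ε := by
          intro ε hε
          set v := min u ε with hv
          have hv0 : 0 < v := lt_min hu0 hε
          have hvu : v ≤ u := min_le_left _ _
          have h1 := hLmono v u hv0 hvu
          have h2 : a ≤ sf v := hge_a v (by rw [hbz]; exact le_of_lt hv0)
          have h3 : (1-L)*v ≤ v := by nlinarith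
          have h4 : v ≤ ε := min_le_right _ _
          simp only [hsf] at h1 h2 ⊢
          simp only [hc₁, hbz]
          linarith
        exact le_of_forall_pos_le_add key
      · -- bh > 0
        have h1 := hLmono bh u hbh0' hu
        have h2 := hge_a bh le_rfl
        simp only [hc₁]
        simp only [hsf] at h1 h2 ⊢
        linarith
  -- pointwise upper bound for 0 ≤ u < bh
  have hle_a : ∀ u : ℝ, 0 ≤ u → u < bh → sf u ≤ a := fun u hu hub =>
    sfun_le hodd hmono hu (hbh ▸ hub)
  have pt_le_pos : ∀ u : ℝ, 0 < u → u < bh → sf u ≤ c₁ + (1-L)*u := by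
    intro u hu hub
    rw [← sub_le_iff_le_add']
    have key : ∀ ε : ℝ, 0 < ε → sf u - (1-L)*u ≤ c₁ + ε := by
      intro ε hε
      by_cases hcase : bh - ε ≤ u
      · have h2 := hle_a u (le_of_lt hu) hub
        have : (1-L)*(bh - u) ≤ bh - u := by nlinarith
        simp only [hc₁]
        linarith
      · push_neg at hcase
        set v := bh - ε with hv
        have hv0 : 0 < v := lt_trans hu hcase
        have h1 := hLmono u v hu (le_of_lt hcase)
        have h2 : sf v ≤ a := hle_a v (le_of_lt hv0) (by simp only [hv]; linarith)
        have h3 : (0:ℝ) ≤ (1-L)*ε := by nlinarith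
        simp only [hc₁, hv] at h1 h2 ⊢
        nlinarith
    linarith [le_of_forall_pos_le_add key]
  have pt_le : ∀ u : ℝ, 0 ≤ u → u < bh → sf u ≤ c₁ + (1-L)*u := by
    intro u hu hub
    rcases eq_or_lt_of_le hu with rfl | hu'
    · -- u = 0
      rw [mul_zero, add_zero]
      have key : ∀ ε : ℝ, 0 < ε → sf 0 ≤ c₁ + ε := by
        intro ε hε
        set v := min (bh/2) ε with hv
        have hv0 : 0 < v := lt_min (by linarith) hε
        have hvb : v < bh := lt_of_le_of_lt (min_le_left _ _) (by linarith)
        have h1 := sfun_monotoneOn hodd hmono htop (le_refl (0:ℝ)) (le_of_lt hv0) (le_of_lt hv0)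
        have h2 := pt_le_pos v hv0 hvb
        have h3 : (1-L)*v ≤ v := by nlinarith
        have h4 : v ≤ ε := min_le_right _ _
        simp only [hsf] at h1 h2 ⊢
        linarith
      exact le_of_forall_pos_le_add key
    · exact pt_le_pos u hu' hub
  -- integral comparison
  have hintlin : ∀ x y : ℝ, IntervalIntegrable (fun u => c₁ - L*u) MeasureTheory.volume x y :=
    fun x y => (continuous_const.sub (continuous_const.mul continuous_id)).intervalIntegrable x y
  have key : (∫ u in bh..b, (c₁ - L*u)) ≤ ∫ u in bh..b, (sf u - u) := by
    rcases le_total bh b with hcab | hcab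
    · apply integral_mono_on hcab (hintlin bh b)
        (sfun_intervalIntegrable hodd hmono htop hbh0 hb)
      intro u hu
      have := pt_ge u hu.1
      show c₁ - L * u ≤ sf u - u
      linarith
    · rw [intervalIntegral.integral_symm b bh, intervalIntegral.integral_symm b bh]
      apply neg_le_neg
      have hnull : ∀ᵐ u ∂(MeasureTheory.volume.restrict (Set.Icc b bh)), u ≠ bh := by
        apply MeasureTheory.ae_restrict_of_ae
        rw [MeasureTheory.ae_iff]
        have hset : {u : ℝ | ¬ u ≠ bh} = {bh} := by ext u; simp
        rw [hset]
        exact Real.volume_singleton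
      have hae : (fun u => sf u - u) ≤ᵐ[MeasureTheory.volume.restrict (Set.Icc b bh)]
          (fun u => c₁ - L*u) := by
        filter_upwards [hnull, MeasureTheory.ae_restrict_mem measurableSet_Icc] with u hu hu2
        have hub : u < bh := lt_of_le_of_ne hu2.2 hu
        have := pt_le u (le_trans hb hu2.1) hub
        show sf u - u ≤ c₁ - L * u
        linarith
      exact integral_mono_ae_restrict hcab
        (sfun_intervalIntegrable hodd hmono htop hb hbh0) (hintlin b bh) hae
  -- compute the linear integral
  have hlin : (∫ u in bh..b, (c₁ - L*u)) = c₁*(b - bh) - L*(b^2 - bh^2)/2 := by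
    have hi2 : IntervalIntegrable (fun u => L*u) MeasureTheory.volume bh b := by
      exact (continuous_const.mul continuous_id).intervalIntegrable bh b
    rw [intervalIntegral.integral_sub (intervalIntegrable_const) hi2, integral_const,
      intervalIntegral.integral_const_mul, integral_id]
    simp only [smul_eq_mul]
    ring
  -- combine integrals
  have hsplit : (∫ u in (0:ℝ)..b, (sf u - u)) - (∫ u in (0:ℝ)..bh, (sf u - u))
      = ∫ u in bh..b, (sf u - u) := by
    rw [intervalIntegral.integral_interval_sub_left
      (sfun_intervalIntegrable hodd hmono htop le_rfl hb)
      (sfun_intervalIntegrable hodd hmono htop le_rfl hbh0)]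
  have hqb := hq b
  have hqbh : q bh = 0 := hqΘ a
  have hring : c₁*(b - bh) - L*(b^2 - bh^2)/2
      = (a - bh)^2/2 - (a-b)^2/2 + (1-L)/2*(b - bh)^2 := by
    simp only [hc₁]; ring
  simp only [hsf] at key hsplit ⊢
  linarith
end ScalarKey


def innerF {n m : ℕ} (A B : Matrix (Fin n) (Fin m) ℝ) : ℝ := ∑ i, ∑ j, A i j * B i j

lemma innerF_comm {n m : ℕ} (A B : Matrix (Fin n) (Fin m) ℝ) : innerF A B = innerF B A := by
  simp [innerF, mul_comm]

lemma frobSq_eq_innerF {n m : ℕ} (A : Matrix (Fin n) (Fin m) ℝ) : frobSq A = innerF A A := by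
  simp [frobSq, innerF, sq]

lemma innerF_sub_left {n m : ℕ} (A B C : Matrix (Fin n) (Fin m) ℝ) :
    innerF (A - B) C = innerF A C - innerF B C := by
  simp [innerF, Matrix.sub_apply, sub_mul, Finset.sum_sub_distrib]

lemma innerF_sub_right {n m : ℕ} (A B C : Matrix (Fin n) (Fin m) ℝ) :
    innerF A (B - C) = innerF A B - innerF A C := by
  simp [innerF, Matrix.sub_apply, mul_sub, Finset.sum_sub_distrib]

lemma frobSq_sub {n m : ℕ} (A B : Matrix (Fin n) (Fin m) ℝ) :
    frobSq (A - B) = innerF A A - 2 * innerF A B + innerF B B := by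
  rw [frobSq_eq_innerF, innerF_sub_left, innerF_sub_right, innerF_sub_right,
    innerF_comm B A]
  ring

lemma frobSq_sub_comm {n m : ℕ} (A B : Matrix (Fin n) (Fin m) ℝ) :
    frobSq (A - B) = frobSq (B - A) := by
  rw [frobSq_sub, frobSq_sub, innerF_comm A B]
  ring

lemma innerF_eq_trace {n m : ℕ} (A B : Matrix (Fin n) (Fin m) ℝ) :
    innerF A B = Matrix.trace (Aᵀ * B) := by
  simp only [Matrix.trace, Matrix.diag, Matrix.mul_apply, Matrix.transpose_apply, innerF]
  rw [Finset.sum_comm]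

lemma innerF_svd {n m k : ℕ} (U U' : Matrix (Fin n) (Fin k) ℝ)
    (V V' : Matrix (Fin m) (Fin k) ℝ) (c b : Fin k → ℝ) :
    innerF (U * diagonal c * Vᵀ) (U' * diagonal b * V'ᵀ)
      = ∑ i, ∑ j, c i * b j * ((Uᵀ * U') i j * (Vᵀ * V') i j) := by
  rw [innerF_eq_trace]
  have h1 : (U * diagonal c * Vᵀ)ᵀ = V * diagonal c * Uᵀ := by
    simp [Matrix.transpose_mul, Matrix.diagonal_transpose, Matrix.mul_assoc]
  rw [h1]
  have h2 : V * diagonal c * Uᵀ * (U' * diagonal b * V'ᵀ)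
      = V * (diagonal c * (Uᵀ * U') * diagonal b * V'ᵀ) := by
    simp only [Matrix.mul_assoc]
  rw [h2, Matrix.trace_mul_comm]
  have h3 : diagonal c * (Uᵀ * U') * diagonal b * V'ᵀ * V
      = diagonal c * (Uᵀ * U') * diagonal b * (V'ᵀ * V) := by
    simp only [Matrix.mul_assoc]
  rw [h3]
  have htr : ∀ (A Q : Matrix (Fin k) (Fin k) ℝ),
      Matrix.trace (A * Q) = ∑ i, ∑ j, A i j * Q j i := by
    intro A Q
    simp only [Matrix.trace, Matrix.diag, Matrix.mul_apply]
  rw [htr]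
  simp only [Matrix.mul_diagonal, Matrix.diagonal_mul]
  apply Finset.sum_congr rfl
  intro i _
  apply Finset.sum_congr rfl
  intro j _
  have hQS : (V'ᵀ * V) j i = (Vᵀ * V') i j := by
    simp only [Matrix.mul_apply, Matrix.transpose_apply]
    exact Finset.sum_congr rfl (fun x _ => mul_comm _ _)
  rw [hQS]
  ring

lemma innerF_svd_same {n m k : ℕ} (U : Matrix (Fin n) (Fin k) ℝ)
    (V : Matrix (Fin m) (Fin k) ℝ) (c b : Fin k → ℝ)
    (hU : Uᵀ * U = 1) (hV : Vᵀ * V = 1) :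
    innerF (U * diagonal c * Vᵀ) (U * diagonal b * Vᵀ) = ∑ i, c i * b i := by
  rw [innerF_svd, hU, hV]
  apply Finset.sum_congr rfl
  intro i _
  rw [Finset.sum_eq_single i]
  · simp [Matrix.one_apply]
  · intro j _ hji
    simp [Matrix.one_apply, Ne.symm hji]
  · intro h; exact absurd (Finset.mem_univ i) h

lemma col_sq_sum {N k : ℕ} (W : Matrix (Fin N) (Fin k) ℝ) (hW : Wᵀ * W = 1)
    (x : Fin N → ℝ) :
    ∑ j, (∑ t, x t * W t j)^2 ≤ ∑ t, (x t)^2 := by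
  have hWy : ∀ t₁ t₂ : Fin k, ∑ t, W t t₁ * W t t₂ = if t₁ = t₂ then (1:ℝ) else 0 := by
    intro t₁ t₂
    have := congrFun (congrFun hW t₁) t₂
    simp only [Matrix.mul_apply, Matrix.transpose_apply, Matrix.one_apply] at this
    exact this
  set g : Fin N → ℝ := fun t => ∑ j, W t j * (∑ t', x t' * W t' j) with hg
  have hWyy : ∑ t, (g t)^2 = ∑ j, (∑ t, x t * W t j)^2 := by
    have expand : ∀ t : Fin N, (g t)^2
        = ∑ j, ∑ j', (W t j * (∑ t', x t' * W t' j)) * (W t j' * (∑ t', x t' * W t' j')) := by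
      intro t
      rw [hg, sq, Finset.sum_mul_sum]
    simp only [expand]
    rw [Finset.sum_comm]
    have h2 : ∀ j, ∑ t, ∑ j', (W t j * (∑ t', x t' * W t' j)) * (W t j' * (∑ t', x t' * W t' j'))
        = ∑ j', ((∑ t', x t' * W t' j) * (∑ t', x t' * W t' j')) * ∑ t, W t j * W t j' := by
      intro j
      rw [Finset.sum_comm]
      apply Finset.sum_congr rfl
      intro j' _
      rw [Finset.mul_sum]
      apply Finset.sum_congr rfl
      intro t _
      ring
    simp only [h2, hWy]
    apply Finset.sum_congr rfl
    intro j _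
    rw [Finset.sum_eq_single j]
    · simp [sq]
    · intro j' _ hne; simp [Ne.symm hne]
    · intro h; exact absurd (Finset.mem_univ j) h
  have hcross : ∑ t, x t * g t = ∑ j, (∑ t, x t * W t j)^2 := by
    have h1 : ∀ t, x t * g t = ∑ j, (x t * W t j) * (∑ t', x t' * W t' j) := by
      intro t
      rw [hg, Finset.mul_sum]
      exact Finset.sum_congr rfl (fun j _ => by ring)
    simp only [h1]
    rw [Finset.sum_comm]
    apply Finset.sum_congr rfl
    intro j _
    rw [← Finset.sum_mul, sq]
  have hpos : (0:ℝ) ≤ ∑ t, (x t - g t)^2 := Finset.sum_nonneg (fun t _ => sq_nonneg _)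
  have hexp : ∑ t, (x t - g t)^2
      = ∑ t, (x t)^2 - 2 * (∑ t, x t * g t) + ∑ t, (g t)^2 := by
    have h3 : ∀ t : Fin N, (x t - g t)^2 = ((x t)^2 + (g t)^2) - 2*(x t * g t) := fun t => by ring
    simp only [h3]
    rw [Finset.sum_sub_distrib, Finset.sum_add_distrib, ← Finset.mul_sum]
    ring
  linarith [hpos, hexp, hWyy, hcross]

lemma orth_row_bound {p k : ℕ} (U1 U0 : Matrix (Fin p) (Fin k) ℝ)
    (h1 : U1ᵀ * U1 = 1) (h0 : U0ᵀ * U0 = 1) (i : Fin k) :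
    ∑ j, ((U1ᵀ * U0) i j)^2 ≤ 1 := by
  have hdiag : ∑ t, (U1 t i)^2 = 1 := by
    have := congrFun (congrFun h1 i) i
    simp only [Matrix.mul_apply, Matrix.transpose_apply, Matrix.one_apply_eq] at this
    rw [← this]
    exact Finset.sum_congr rfl (fun t _ => by rw [sq])
  calc ∑ j, ((U1ᵀ * U0) i j)^2 = ∑ j, (∑ t, U1 t i * U0 t j)^2 :=
        Finset.sum_congr rfl (fun j _ => rfl)
    _ ≤ ∑ t, (U1 t i)^2 := col_sq_sum U0 h0 _
    _ = 1 := hdiag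

lemma orth_col_bound {p k : ℕ} (U1 U0 : Matrix (Fin p) (Fin k) ℝ)
    (h1 : U1ᵀ * U1 = 1) (h0 : U0ᵀ * U0 = 1) (j : Fin k) :
    ∑ i, ((U1ᵀ * U0) i j)^2 ≤ 1 := by
  have hdiag : ∑ t, (U0 t j)^2 = 1 := by
    have := congrFun (congrFun h0 j) j
    simp only [Matrix.mul_apply, Matrix.transpose_apply, Matrix.one_apply_eq] at this
    rw [← this]
    exact Finset.sum_congr rfl (fun t _ => by rw [sq])
  calc ∑ i, ((U1ᵀ * U0) i j)^2 = ∑ i, (∑ t, U0 t j * U1 t i)^2 := by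
        apply Finset.sum_congr rfl
        intro i _
        congr 1
        simp only [Matrix.mul_apply, Matrix.transpose_apply]
        exact Finset.sum_congr rfl (fun t _ => mul_comm _ _)
    _ ≤ ∑ t, (U0 t j)^2 := col_sq_sum U1 h1 _
    _ = 1 := hdiag

lemma double_sum_bound {k : ℕ} (cc bb α β : Fin k → ℝ) (R S : Matrix (Fin k) (Fin k) ℝ)
    (hc : ∀ i, 0 ≤ cc i) (hb : ∀ j, 0 ≤ bb j) (hα : ∀ i, 0 ≤ α i) (hβ : ∀ j, 0 ≤ β j)
    (hcb : ∀ i j, cc i * bb j ≤ α i + β j)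
    (hrowR : ∀ i, ∑ j, (R i j)^2 ≤ 1) (hrowS : ∀ i, ∑ j, (S i j)^2 ≤ 1)
    (hcolR : ∀ j, ∑ i, (R i j)^2 ≤ 1) (hcolS : ∀ j, ∑ i, (S i j)^2 ≤ 1) :
    ∑ i, ∑ j, cc i * bb j * (R i j * S i j) ≤ ∑ i, α i + ∑ j, β j := by
  have step1 : ∑ i, ∑ j, cc i * bb j * (R i j * S i j)
      ≤ ∑ i, ∑ j, (α i + β j) * (((R i j)^2 + (S i j)^2)/2) := by
    apply Finset.sum_le_sum
    intro i _
    apply Finset.sum_le_sum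
    intro j _
    have hRS : R i j * S i j ≤ ((R i j)^2 + (S i j)^2)/2 := by
      nlinarith [sq_nonneg (R i j - S i j)]
    have hD : (0:ℝ) ≤ ((R i j)^2 + (S i j)^2)/2 := by positivity
    have h1 : cc i * bb j * (R i j * S i j) ≤ cc i * bb j * (((R i j)^2 + (S i j)^2)/2) :=
      mul_le_mul_of_nonneg_left hRS (mul_nonneg (hc i) (hb j))
    have h2 : cc i * bb j * (((R i j)^2 + (S i j)^2)/2)
        ≤ (α i + β j) * (((R i j)^2 + (S i j)^2)/2) :=
      mul_le_mul_of_nonneg_right (hcb i j) hD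
    linarith
  have step2 : ∑ i, ∑ j, (α i + β j) * (((R i j)^2 + (S i j)^2)/2)
      = ∑ i, α i * (∑ j, ((R i j)^2 + (S i j)^2)/2)
        + ∑ j, β j * (∑ i, ((R i j)^2 + (S i j)^2)/2) := by
    have h1 : ∀ i, ∑ j, (α i + β j) * (((R i j)^2 + (S i j)^2)/2)
        = α i * (∑ j, ((R i j)^2 + (S i j)^2)/2)
          + ∑ j, β j * (((R i j)^2 + (S i j)^2)/2) := by
      intro i
      rw [Finset.mul_sum, ← Finset.sum_add_distrib]
      exact Finset.sum_congr rfl (fun j _ => by ring)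
    simp only [h1]
    rw [Finset.sum_add_distrib]
    congr 1
    rw [Finset.sum_comm]
    exact Finset.sum_congr rfl (fun j _ => (Finset.mul_sum _ _ _).symm)
  have step3 : ∑ i, α i * (∑ j, ((R i j)^2 + (S i j)^2)/2) ≤ ∑ i, α i := by
    apply Finset.sum_le_sum
    intro i _
    have hrow : ∑ j, ((R i j)^2 + (S i j)^2)/2 ≤ 1 := by
      have := hrowR i
      have := hrowS i
      rw [show (fun j => ((R i j)^2 + (S i j)^2)/2) = fun j => ((R i j)^2 + (S i j)^2)/2 from rfl]
      have hsplit : ∑ j, ((R i j)^2 + (S i j)^2)/2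
          = ((∑ j, (R i j)^2) + ∑ j, (S i j)^2)/2 := by
        rw [← Finset.sum_add_distrib, ← Finset.sum_div]
      rw [hsplit]
      linarith
    calc α i * (∑ j, ((R i j)^2 + (S i j)^2)/2) ≤ α i * 1 :=
          mul_le_mul_of_nonneg_left hrow (hα i)
      _ = α i := mul_one _
  have step4 : ∑ j, β j * (∑ i, ((R i j)^2 + (S i j)^2)/2) ≤ ∑ j, β j := by
    apply Finset.sum_le_sum
    intro j _
    have hcol : ∑ i, ((R i j)^2 + (S i j)^2)/2 ≤ 1 := by
      have := hcolR j
      have := hcolS j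
      have hsplit : ∑ i, ((R i j)^2 + (S i j)^2)/2
          = ((∑ i, (R i j)^2) + ∑ i, (S i j)^2)/2 := by
        rw [← Finset.sum_add_distrib, ← Finset.sum_div]
      rw [hsplit]
      linarith
    calc β j * (∑ i, ((R i j)^2 + (S i j)^2)/2) ≤ β j * 1 :=
          mul_le_mul_of_nonneg_left hcol (hβ j)
      _ = β j := mul_one _
  linarith

lemma mulVec_sq_le {n p : ℕ} (X : Matrix (Fin n) (Fin p) ℝ) (v : Fin p → ℝ) :
    ∑ i, ((X *ᵥ v) i)^2 ≤ spectralNormSq X * ∑ j, (v j)^2 := by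
  set T := LinearMap.toContinuousLinearMap (Matrix.toEuclideanLin X) with hT
  set w : EuclideanSpace ℝ (Fin p) := (WithLp.equiv 2 (Fin p → ℝ)).symm v with hw
  have h1 : ‖T w‖ ≤ ‖T‖ * ‖w‖ := T.le_opNorm w
  have hTw : T w = (WithLp.equiv 2 (Fin n → ℝ)).symm (X *ᵥ v) := by
    rw [hT]
    simp only [LinearMap.coe_toContinuousLinearMap']
    exact Matrix.toEuclideanLin_apply_piLp_toLp X v
  have hnTw : ‖T w‖^2 = ∑ i, ((X *ᵥ v) i)^2 := by
    rw [hTw, EuclideanSpace.norm_eq, Real.sq_sqrt (by positivity)]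
    apply Finset.sum_congr rfl
    intro i _
    rw [Real.norm_eq_abs, sq_abs]
    rfl
  have hnw : ‖w‖^2 = ∑ j, (v j)^2 := by
    rw [hw, EuclideanSpace.norm_eq, Real.sq_sqrt (by positivity)]
    apply Finset.sum_congr rfl
    intro j _
    rw [Real.norm_eq_abs, sq_abs]
    rfl
  have h2 : ‖T w‖^2 ≤ (‖T‖ * ‖w‖)^2 := pow_le_pow_left₀ (norm_nonneg _) h1 2
  rw [mul_pow] at h2
  rw [← hnTw, spectralNormSq, ← hnw]
  exact h2

lemma frob_mul_le {n p m : ℕ} (X : Matrix (Fin n) (Fin p) ℝ)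
    (D : Matrix (Fin p) (Fin m) ℝ) :
    ∑ i, ∑ kk, ((X * D) i kk)^2 ≤ spectralNormSq X * frobSq D := by
  rw [Finset.sum_comm]
  have hcol : ∀ kk : Fin m, ∑ i, ((X * D) i kk)^2
      ≤ spectralNormSq X * ∑ j, (D j kk)^2 := by
    intro kk
    exact mulVec_sq_le X (fun j => D j kk)
  calc ∑ kk, ∑ i, ((X * D) i kk)^2 ≤ ∑ kk, spectralNormSq X * ∑ j, (D j kk)^2 :=
        Finset.sum_le_sum (fun kk _ => hcol kk)
    _ = spectralNormSq X * frobSq D := by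
        rw [← Finset.mul_sum, frobSq]
        congr 1
        rw [Finset.sum_comm]

lemma innerF_transpose_mul {n p m : ℕ} (X : Matrix (Fin n) (Fin p) ℝ)
    (M : Matrix (Fin n) (Fin m) ℝ) (D : Matrix (Fin p) (Fin m) ℝ) :
    innerF (Xᵀ * M) D = ∑ i, ∑ kk, M i kk * ((X * D) i kk) := by
  rw [innerF_eq_trace]
  have h1 : (Xᵀ * M)ᵀ * D = Mᵀ * (X * D) := by
    rw [Matrix.transpose_mul, Matrix.transpose_transpose, Matrix.mul_assoc]
  rw [h1, ← innerF_eq_trace]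
  rfl

lemma negloglik_smooth {n p m : ℕ} (X : Matrix (Fin n) (Fin p) ℝ)
    (Y : Matrix (Fin n) (Fin m) ℝ) (B1 B2 : Matrix (Fin p) (Fin m) ℝ) :
    logisticNegLogLik X Y B2 - logisticNegLogLik X Y B1
      ≤ innerF (Xᵀ * logisticMu X B1 - Xᵀ * Y) (B2 - B1)
        + (1/8) * ∑ i, ∑ kk, ((X * (B2 - B1)) i kk)^2 := by
  have hmu : ∀ (i : Fin n) (kk : Fin m), logisticMu X B1 i kk = sigf ((X * B1) i kk) := by
    intro i kk
    simp only [logisticMu, Matrix.of_apply, sigf]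
    rw [Real.exp_neg]
    have h := (Real.exp_pos ((X * B1) i kk)).ne'
    field_simp
    ring
  have hXD : ∀ (i : Fin n) (kk : Fin m),
      (X * (B2 - B1)) i kk = (X * B2) i kk - (X * B1) i kk := by
    intro i kk
    rw [Matrix.mul_sub, Matrix.sub_apply]
  have hdiff : logisticNegLogLik X Y B2 - logisticNegLogLik X Y B1
      = ∑ kk, ∑ i, ((Real.log (1 + Real.exp ((X * B2) i kk))
          - Real.log (1 + Real.exp ((X * B1) i kk)))
          - Y i kk * ((X * B2) i kk - (X * B1) i kk)) := by
    simp only [logisticNegLogLik]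
    rw [neg_sub_neg, ← Finset.sum_sub_distrib]
    apply Finset.sum_congr rfl
    intro kk _
    rw [← Finset.sum_sub_distrib]
    apply Finset.sum_congr rfl
    intro i _
    ring
  have hR : innerF (Xᵀ * logisticMu X B1 - Xᵀ * Y) (B2 - B1)
      = ∑ kk, ∑ i, (sigf ((X * B1) i kk) - Y i kk) * ((X * (B2 - B1)) i kk) := by
    rw [← Matrix.mul_sub, innerF_transpose_mul, Finset.sum_comm]
    apply Finset.sum_congr rfl
    intro kk _
    apply Finset.sum_congr rfl
    intro i _
    rw [Matrix.sub_apply, hmu]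
  have hQc : ∑ i, ∑ kk, ((X * (B2 - B1)) i kk)^2
      = ∑ kk, ∑ i, ((X * (B2 - B1)) i kk)^2 := Finset.sum_comm
  rw [hdiff, hR, hQc, Finset.mul_sum, ← Finset.sum_add_distrib]
  apply Finset.sum_le_sum
  intro kk _
  rw [Finset.mul_sum, ← Finset.sum_add_distrib]
  apply Finset.sum_le_sum
  intro i _
  rw [hXD]
  have h := logistic_quad ((X * B1) i kk) ((X * B2) i kk)
  have hexp : (sigf ((X * B1) i kk) - Y i kk) * ((X * B2) i kk - (X * B1) i kk)
      = sigf ((X * B1) i kk) * ((X * B2) i kk - (X * B1) i kk)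
        - Y i kk * ((X * B2) i kk - (X * B1) i kk) := by ring
  rw [hexp]
  linarith


noncomputable def Pbar (Θ : ℝ → ℝ → ℝ) (lam : ℝ) (q : ℝ → ℝ) (θ : ℝ) : ℝ :=
  (∫ u in (0:ℝ)..θ, (sSup {s : ℝ | Θ s lam ≤ u} - u)) + q θ

lemma Pbar_nonneg {Θ : ℝ → ℝ → ℝ} {lam : ℝ}
    (hodd : ∀ t : ℝ, Θ (-t) lam = -Θ t lam)
    (hmono : Monotone fun t => Θ t lam)
    (htop : Filter.Tendsto (fun t => Θ t lam) Filter.atTop Filter.atTop)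
    (hbnd : ∀ t : ℝ, 0 ≤ t → 0 ≤ Θ t lam ∧ Θ t lam ≤ t)
    (q : ℝ → ℝ) (hq : ∀ θ, 0 ≤ q θ) {θ : ℝ} (hθ : 0 ≤ θ) :
    0 ≤ Pbar Θ lam q θ :=
  pbar_nonneg hodd hmono htop hbnd q hq hθ

lemma scalar_key' {Θ : ℝ → ℝ → ℝ} {lam L : ℝ}
    (hodd : ∀ t : ℝ, Θ (-t) lam = -Θ t lam)
    (hmono : Monotone fun t => Θ t lam)
    (htop : Filter.Tendsto (fun t => Θ t lam) Filter.atTop Filter.atTop)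
    (hbnd : ∀ t : ℝ, 0 ≤ t → 0 ≤ Θ t lam ∧ Θ t lam ≤ t)
    (hL0 : 0 ≤ L) (hL1 : L ≤ 1)
    (hLmono : ∀ u v : ℝ, 0 < u → u ≤ v →
      sSup {s : ℝ | Θ s lam ≤ u} - (1 - L) * u ≤ sSup {s : ℝ | Θ s lam ≤ v} - (1 - L) * v)
    (q : ℝ → ℝ) (hq : ∀ θ, 0 ≤ q θ) (hqΘ : ∀ t, q (Θ t lam) = 0)
    (a b : ℝ) (ha : 0 ≤ a) (hb : 0 ≤ b) :
    (a - Θ a lam)^2/2 + Pbar Θ lam q (Θ a lam) + (1-L)/2*(b - Θ a lam)^2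
      ≤ (a - b)^2/2 + Pbar Θ lam q b :=
  scalar_key hodd hmono htop hbnd hL0 hL1 hLmono q hq hqΘ a b ha hb


/-- Descent property of the singular-value penalized iteration (logistic case): with binary
responses, `‖X‖₂² < 4(2 − L_Θ)`, and iterates
`B⁽ʲ⁺¹⁾ = Θ^σ(B⁽ʲ⁾ + XᵀY − Xᵀμ(B⁽ʲ⁾); λ)` (given via an SVD `(U j, σ j, V j)` of the
argument at each step), the objective
`F(B) = −∑_{k,i}(y_{ik} x_iᵀb_k − log(1+exp(x_iᵀb_k))) + ∑_s P(σ_s(B);λ)` satisfies, for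
all `j ≥ 1`, `F(B⁽ʲ⁾) − F(B⁽ʲ⁺¹⁾) ≥ (C/2)‖B⁽ʲ⁾ − B⁽ʲ⁺¹⁾‖_F²` with
`C = 2 − L_Θ − ‖X‖₂²/4`; in particular `F(B⁽ʲ⁾)` is nonincreasing. -/
theorem descent_logistic_iteration {n p m : ℕ}
    (Θ : ℝ → ℝ → ℝ) (hΘ : IsThresholdFunction Θ) (lam : ℝ) (hlam : 0 ≤ lam)
    (L : ℝ) (hL0 : 0 ≤ L) (hL1 : L ≤ 1)
    (hLmono : ∀ u v : ℝ, 0 < u → u ≤ v →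
      sSup {s : ℝ | Θ s lam ≤ u} - (1 - L) * u ≤ sSup {s : ℝ | Θ s lam ≤ v} - (1 - L) * v)
    (P q : ℝ → ℝ)
    (hq : ∀ θ : ℝ, 0 ≤ q θ) (hqΘ : ∀ t : ℝ, q (Θ t lam) = 0)
    (hP : ∀ θ : ℝ,
      P θ - P 0 = (∫ u in (0:ℝ)..|θ|, (sSup {s : ℝ | Θ s lam ≤ u} - u)) + q θ)
    (Y : Matrix (Fin n) (Fin m) ℝ) (hY : ∀ i k, Y i k = 0 ∨ Y i k = 1)
    (X : Matrix (Fin n) (Fin p) ℝ)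
    (hX : spectralNormSq X < 4 * (2 - L))
    (B : ℕ → Matrix (Fin p) (Fin m) ℝ)
    (U : ℕ → Matrix (Fin p) (Fin (min p m)) ℝ)
    (σ : ℕ → Fin (min p m) → ℝ)
    (V : ℕ → Matrix (Fin m) (Fin (min p m)) ℝ)
    (hSVD : ∀ j : ℕ,
      IsSVD (B j + Xᵀ * Y - Xᵀ * logisticMu X (B j)) (U j) (σ j) (V j))
    (hiter : ∀ j : ℕ, B (j + 1) = U j * diagonal (fun i => Θ (σ j i) lam) * (V j)ᵀ) :
    ∀ j : ℕ,
      (logisticNegLogLik X Y (B (j + 1)) + ∑ i, P (Θ (σ j i) lam))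
          - (logisticNegLogLik X Y (B (j + 2)) + ∑ i, P (Θ (σ (j + 1) i) lam))
        ≥ (2 - L - spectralNormSq X / 4) / 2 * frobSq (B (j + 1) - B (j + 2)) := by
  intro j
  obtain ⟨hodd, hmono, htop, hbnd⟩ := hΘ lam hlam
  obtain ⟨hU1, hV1, _hanti1, ha0, hΞ⟩ := hSVD (j+1)
  obtain ⟨hU0, hV0, _hanti0, hσ0, _hB0⟩ := hSVD j
  have hB1 : B (j+1) = U j * diagonal (fun i => Θ (σ j i) lam) * (V j)ᵀ := hiter j
  have hB2 : B (j+2) = U (j+1) * diagonal (fun i => Θ (σ (j+1) i) lam) * (V (j+1))ᵀ :=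
    hiter (j+1)
  -- nonnegativity facts
  have hbh0 : ∀ i, 0 ≤ Θ (σ (j+1) i) lam := fun i => (hbnd _ (ha0 i)).1
  have hbha : ∀ i, Θ (σ (j+1) i) lam ≤ σ (j+1) i := fun i => (hbnd _ (ha0 i)).2
  have hbb0 : ∀ i, 0 ≤ Θ (σ j i) lam := fun i => (hbnd _ (hσ0 i)).1
  have hq0 : q 0 = 0 := by have h := hqΘ 0; rwa [theta_zero hodd] at h
  have hPb0 : Pbar Θ lam q 0 = 0 := by unfold Pbar; simp [hq0]
  -- scalar key consequences
  have hcb : ∀ i i2 : Fin (min p m),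
      (σ (j+1) i - (1-L) * Θ (σ (j+1) i) lam) * (Θ (σ j i2) lam)
      ≤ (σ (j+1) i * Θ (σ (j+1) i) lam - (2-L)/2 * (Θ (σ (j+1) i) lam)^2
          - Pbar Θ lam q (Θ (σ (j+1) i) lam))
        + (L/2 * (Θ (σ j i2) lam)^2 + Pbar Θ lam q (Θ (σ j i2) lam)) := by
    intro i i2
    have h := scalar_key' hodd hmono htop hbnd hL0 hL1 hLmono q hq hqΘ
      (σ (j+1) i) (Θ (σ j i2) lam) (ha0 i) (hbb0 i2)
    have hid : (σ (j+1) i - Θ (σ j i2) lam)^2/2 + Pbar Θ lam q (Θ (σ j i2) lam)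
        - ((σ (j+1) i - Θ (σ (j+1) i) lam)^2/2 + Pbar Θ lam q (Θ (σ (j+1) i) lam)
          + (1-L)/2*(Θ (σ j i2) lam - Θ (σ (j+1) i) lam)^2)
        = (σ (j+1) i * Θ (σ (j+1) i) lam - (2-L)/2 * (Θ (σ (j+1) i) lam)^2
            - Pbar Θ lam q (Θ (σ (j+1) i) lam))
          + (L/2 * (Θ (σ j i2) lam)^2 + Pbar Θ lam q (Θ (σ j i2) lam))
          - (σ (j+1) i - (1-L) * Θ (σ (j+1) i) lam) * (Θ (σ j i2) lam) := by ring
    linarith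
  have hα : ∀ i : Fin (min p m), 0 ≤ σ (j+1) i * Θ (σ (j+1) i) lam
      - (2-L)/2 * (Θ (σ (j+1) i) lam)^2 - Pbar Θ lam q (Θ (σ (j+1) i) lam) := by
    intro i
    have h := scalar_key' hodd hmono htop hbnd hL0 hL1 hLmono q hq hqΘ
      (σ (j+1) i) 0 (ha0 i) le_rfl
    rw [hPb0] at h
    have hid : (σ (j+1) i - 0)^2/2 + 0
        - ((σ (j+1) i - Θ (σ (j+1) i) lam)^2/2 + Pbar Θ lam q (Θ (σ (j+1) i) lam)
          + (1-L)/2*(0 - Θ (σ (j+1) i) lam)^2)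
        = σ (j+1) i * Θ (σ (j+1) i) lam - (2-L)/2 * (Θ (σ (j+1) i) lam)^2
          - Pbar Θ lam q (Θ (σ (j+1) i) lam) := by ring
    linarith
  have hβ : ∀ i2 : Fin (min p m),
      0 ≤ L/2 * (Θ (σ j i2) lam)^2 + Pbar Θ lam q (Θ (σ j i2) lam) := by
    intro i2
    have h1 := Pbar_nonneg hodd hmono htop hbnd q hq (hbb0 i2)
    nlinarith [sq_nonneg (Θ (σ j i2) lam)]
  have hc : ∀ i : Fin (min p m), 0 ≤ σ (j+1) i - (1-L) * Θ (σ (j+1) i) lam := by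
    intro i
    nlinarith [hbh0 i, hbha i]
  have hmain := double_sum_bound
    (fun i => σ (j+1) i - (1-L) * Θ (σ (j+1) i) lam)
    (fun i2 => Θ (σ j i2) lam)
    (fun i => σ (j+1) i * Θ (σ (j+1) i) lam - (2-L)/2 * (Θ (σ (j+1) i) lam)^2
      - Pbar Θ lam q (Θ (σ (j+1) i) lam))
    (fun i2 => L/2 * (Θ (σ j i2) lam)^2 + Pbar Θ lam q (Θ (σ j i2) lam))
    ((U (j+1))ᵀ * U j) ((V (j+1))ᵀ * V j)
    hc hbb0 hα hβ hcb
    (orth_row_bound _ _ hU1 hU0) (orth_row_bound _ _ hV1 hV0)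
    (orth_col_bound _ _ hU1 hU0) (orth_col_bound _ _ hV1 hV0)
  -- trace identities
  have hT1 : innerF (U (j+1) * diagonal (σ (j+1)) * (V (j+1))ᵀ) (B (j+1))
      = ∑ i, ∑ i2, σ (j+1) i * Θ (σ j i2) lam
        * ((((U (j+1))ᵀ * U j) i i2) * ((((V (j+1))ᵀ * V j)) i i2)) := by
    rw [hB1]
    exact innerF_svd _ _ _ _ _ _
  have hT2 : innerF (B (j+2)) (B (j+1))
      = ∑ i, ∑ i2, Θ (σ (j+1) i) lam * Θ (σ j i2) lam
        * ((((U (j+1))ᵀ * U j) i i2) * ((((V (j+1))ᵀ * V j)) i i2)) := by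
    rw [hB1, hB2]
    exact innerF_svd _ _ _ _ _ _
  have hT3 : innerF (U (j+1) * diagonal (σ (j+1)) * (V (j+1))ᵀ) (B (j+2))
      = ∑ i, σ (j+1) i * Θ (σ (j+1) i) lam := by
    rw [hB2]
    exact innerF_svd_same _ _ _ _ hU1 hV1
  have hT4 : innerF (B (j+1)) (B (j+1)) = ∑ i, (Θ (σ j i) lam)^2 := by
    rw [hB1, innerF_svd_same _ _ _ _ hU0 hV0]
    exact Finset.sum_congr rfl (fun i _ => (pow_two _).symm)
  have hT5 : innerF (B (j+2)) (B (j+2)) = ∑ i, (Θ (σ (j+1) i) lam)^2 := by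
    rw [hB2, innerF_svd_same _ _ _ _ hU1 hV1]
    exact Finset.sum_congr rfl (fun i _ => (pow_two _).symm)
  have hS1 : innerF (U (j+1) * diagonal (σ (j+1)) * (V (j+1))ᵀ) (B (j+1))
      - (1-L) * innerF (B (j+2)) (B (j+1))
      = ∑ i, ∑ i2, (σ (j+1) i - (1-L) * Θ (σ (j+1) i) lam) * (Θ (σ j i2) lam)
        * ((((U (j+1))ᵀ * U j) i i2) * ((((V (j+1))ᵀ * V j)) i i2)) := by
    rw [hT1, hT2, Finset.mul_sum, ← Finset.sum_sub_distrib]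
    apply Finset.sum_congr rfl
    intro i _
    rw [Finset.mul_sum, ← Finset.sum_sub_distrib]
    apply Finset.sum_congr rfl
    intro i2 _
    ring
  -- sum splittings
  have hαs : ∑ i, (σ (j+1) i * Θ (σ (j+1) i) lam - (2-L)/2 * (Θ (σ (j+1) i) lam)^2
      - Pbar Θ lam q (Θ (σ (j+1) i) lam))
      = (∑ i, σ (j+1) i * Θ (σ (j+1) i) lam)
        - (2-L)/2 * (∑ i, (Θ (σ (j+1) i) lam)^2)
        - ∑ i, Pbar Θ lam q (Θ (σ (j+1) i) lam) := by
    rw [Finset.sum_sub_distrib, Finset.sum_sub_distrib, Finset.mul_sum]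
  have hβs : ∑ i2, (L/2 * (Θ (σ j i2) lam)^2 + Pbar Θ lam q (Θ (σ j i2) lam))
      = L/2 * (∑ i2, (Θ (σ j i2) lam)^2) + ∑ i2, Pbar Θ lam q (Θ (σ j i2) lam) := by
    rw [Finset.sum_add_distrib, Finset.mul_sum]
  rw [hαs, hβs] at hmain
  rw [← hS1, ← hT3, ← hT4, ← hT5] at hmain
  -- penalty difference
  have hPdiff : (∑ i, P (Θ (σ j i) lam)) - (∑ i, P (Θ (σ (j+1) i) lam))
      = (∑ i, Pbar Θ lam q (Θ (σ j i) lam)) - ∑ i, Pbar Θ lam q (Θ (σ (j+1) i) lam) := by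
    have h1 : ∀ θ : ℝ, 0 ≤ θ → P θ = Pbar Θ lam q θ + P 0 := by
      intro θ hθ
      have h := hP θ
      rw [abs_of_nonneg hθ] at h
      unfold Pbar
      linarith
    rw [Finset.sum_congr rfl (fun i (_ : i ∈ Finset.univ) => h1 _ (hbb0 i)),
      Finset.sum_congr rfl (fun i (_ : i ∈ Finset.univ) => h1 _ (hbh0 i)),
      Finset.sum_add_distrib, Finset.sum_add_distrib]
    ring
  -- smoothness
  have hG : Xᵀ * logisticMu X (B (j+1)) - Xᵀ * Y
      = B (j+1) - (U (j+1) * diagonal (σ (j+1)) * (V (j+1))ᵀ) := by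
    rw [← hΞ]
    abel
  have hsm := negloglik_smooth X Y (B (j+1)) (B (j+2))
  rw [hG] at hsm
  have hE1 : innerF (B (j+1) - (U (j+1) * diagonal (σ (j+1)) * (V (j+1))ᵀ))
      (B (j+2) - B (j+1))
      = innerF (B (j+2)) (B (j+1)) - innerF (B (j+1)) (B (j+1))
        - innerF (U (j+1) * diagonal (σ (j+1)) * (V (j+1))ᵀ) (B (j+2))
        + innerF (U (j+1) * diagonal (σ (j+1)) * (V (j+1))ᵀ) (B (j+1)) := by
    rw [innerF_sub_left, innerF_sub_right, innerF_sub_right,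
      innerF_comm (B (j+1)) (B (j+2))]
    ring
  rw [hE1] at hsm
  have hQ := frob_mul_le X (B (j+2) - B (j+1))
  have hE2 := frobSq_sub (B (j+2)) (B (j+1))
  have hE3 : frobSq (B (j+1) - B (j+2)) = frobSq (B (j+2) - B (j+1)) :=
    frobSq_sub_comm _ _
  rw [ge_iff_le, hE3, hE2]
  rw [hE2] at hQ
  linarith [hsm, hQ, hmain, hT3, hT4, hT5, hPdiff]
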